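/- Suppose ρ ≥ (27/8)‖x‖² and x ≠ 0. If w ∈ ℝⁿ satisfies ‖w − x‖ ≤ (1/8)‖x‖, and z⁺ = (2wwᵀ + (‖w‖² + ρ)I)⁻¹ (2(xᵀw)x + (‖x‖² + ρ)w), then ‖z⁺ − x‖ ≤ (1/8)‖x‖. -/

import Mathlib

open scoped RealInnerProductSpace

set_option maxHeartbeats 2000000 in
theorem stmt_15 {n : ℕ} (x w : EuclideanSpace ℝ (Fin n)) (hx : x ≠ 0)
    (ρ : ℝ) (hρ : (27 / 8) * ‖x‖ ^ 2 ≤ ρ)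
    (hw : ‖w - x‖ ≤ (1 / 8) * ‖x‖) (zplus : EuclideanSpace ℝ (Fin n))
    (hz : (2 * ⟪w, zplus⟫) • w + (‖w‖ ^ 2 + ρ) • zplus =
      (2 * ⟪x, w⟫) • x + (‖x‖ ^ 2 + ρ) • w) :
    ‖zplus - x‖ ≤ (1 / 8) * ‖x‖ := by
  have hxpos : (0:ℝ) < ‖x‖ := norm_pos_iff.mpr hx
  have hs : (0:ℝ) < ‖x‖ ^ 2 := by positivity
  have hδ : ‖w - x‖ ^ 2 ≤ ‖x‖ ^ 2 / 64 := by
    nlinarith [norm_nonneg (w - x), norm_nonneg x, hw]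
  have hw1 : (7:ℝ)/8 * ‖x‖ ≤ ‖w‖ := by
    have h1 := norm_sub_norm_le x w
    rw [norm_sub_rev] at h1
    linarith
  have hw2 : ‖w‖ ≤ (9:ℝ)/8 * ‖x‖ := by
    have h1 := norm_sub_norm_le w x
    linarith
  have hWl : (49:ℝ)/64 * ‖x‖ ^ 2 ≤ ‖w‖ ^ 2 := by
    nlinarith [norm_nonneg w, hxpos.le, hw1]
  have hWu : ‖w‖ ^ 2 ≤ (81:ℝ)/64 * ‖x‖ ^ 2 := by
    nlinarith [norm_nonneg w, hxpos.le, hw2]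
  have hWpos : (0:ℝ) < ‖w‖ ^ 2 := by nlinarith
  have hρpos : (0:ℝ) < ρ := by nlinarith
  have hdW : ‖w - x‖ ^ 2 = ‖w‖ ^ 2 - 2 * ⟪w, x⟫ + ‖x‖ ^ 2 := norm_sub_sq_real w x
  have hxw : (⟪x, w⟫ : ℝ) = ⟪w, x⟫ := real_inner_comm w x
  -- scalar consequence of hz : inner with w
  have hzq : (2 * ⟪w, zplus⟫) * ‖w‖ ^ 2 + (‖w‖ ^ 2 + ρ) * ⟪w, zplus⟫
      = (2 * ⟪x, w⟫) * ⟪w, x⟫ + (‖x‖ ^ 2 + ρ) * ‖w‖ ^ 2 := by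
    have h := congrArg (fun v : EuclideanSpace ℝ (Fin n) => (⟪w, v⟫ : ℝ)) hz
    simp only [inner_add_right, real_inner_smul_right, real_inner_self_eq_norm_sq] at h
    linear_combination h
  -- E1
  have hE1 : (3 * ‖w‖ ^ 2 + ρ) * (⟪w, zplus⟫ - ⟪w, x⟫)
      = (ρ - ‖x‖ ^ 2 + ‖w - x‖ ^ 2) * (‖w‖ ^ 2 - ⟪w, x⟫) - (‖w‖ ^ 2 - ‖x‖ ^ 2) * ‖w‖ ^ 2 := by
    linear_combination hzq + (2 * ⟪w, x⟫) * hxw + (⟪w, x⟫ - ‖w‖ ^ 2) * hdW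
  -- vector identity
  have hzp : (‖w‖ ^ 2 + ρ) • zplus
      = (2 * ⟪x, w⟫) • x + (‖x‖ ^ 2 + ρ) • w - (2 * ⟪w, zplus⟫) • w := by
    rw [← hz]; abel
  have hKEY : (‖w‖ ^ 2 + ρ) • (zplus - x)
      = (ρ - ‖x‖ ^ 2 + ‖w - x‖ ^ 2) • (w - x)
        - (‖w‖ ^ 2 - ‖x‖ ^ 2 + 2 * (⟪w, zplus⟫ - ⟪w, x⟫)) • w := by
    rw [smul_sub, hzp, hdW, hxw]
    module
  have hsq : ∀ (a : ℝ) (v : EuclideanSpace ℝ (Fin n)), ‖a • v‖ ^ 2 = a ^ 2 * ‖v‖ ^ 2 := by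
    intro a v
    rw [norm_smul, mul_pow, Real.norm_eq_abs, sq_abs]
  have hR : ‖(ρ - ‖x‖ ^ 2 + ‖w - x‖ ^ 2) • (w - x)
        - (‖w‖ ^ 2 - ‖x‖ ^ 2 + 2 * (⟪w, zplus⟫ - ⟪w, x⟫)) • w‖ ^ 2
      = (ρ - ‖x‖ ^ 2 + ‖w - x‖ ^ 2) ^ 2 * ‖w - x‖ ^ 2
        - 2 * ((ρ - ‖x‖ ^ 2 + ‖w - x‖ ^ 2) * (‖w‖ ^ 2 - ‖x‖ ^ 2 + 2 * (⟪w, zplus⟫ - ⟪w, x⟫)))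
            * ⟪w - x, w⟫
        + (‖w‖ ^ 2 - ‖x‖ ^ 2 + 2 * (⟪w, zplus⟫ - ⟪w, x⟫)) ^ 2 * ‖w‖ ^ 2 := by
    rw [norm_sub_sq_real, real_inner_smul_left, real_inner_smul_right, hsq, hsq]
    ring
  have hQc : (⟪w - x, w⟫ : ℝ) = ‖w‖ ^ 2 - ⟪w, x⟫ := by
    rw [real_inner_comm, inner_sub_right, real_inner_self_eq_norm_sq]
  have hE2 : (‖w‖ ^ 2 + ρ) ^ 2 * ‖zplus - x‖ ^ 2
      = (ρ - ‖x‖ ^ 2 + ‖w - x‖ ^ 2) ^ 2 * ‖w - x‖ ^ 2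
        - 2 * ((ρ - ‖x‖ ^ 2 + ‖w - x‖ ^ 2) * (‖w‖ ^ 2 - ‖x‖ ^ 2 + 2 * (⟪w, zplus⟫ - ⟪w, x⟫)))
            * (‖w‖ ^ 2 - ⟪w, x⟫)
        + (‖w‖ ^ 2 - ‖x‖ ^ 2 + 2 * (⟪w, zplus⟫ - ⟪w, x⟫)) ^ 2 * ‖w‖ ^ 2 := by
    have h := congrArg (fun v : EuclideanSpace ℝ (Fin n) => ‖v‖ ^ 2) hKEY
    rw [hsq, hR, hQc] at h
    exact h
  -- abbreviations (purely notational)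
  set S := ‖x‖ ^ 2 with hS
  set W := ‖w‖ ^ 2 with hWdef
  set D := ‖w - x‖ ^ 2 with hD
  set N := ‖zplus - x‖ ^ 2 with hN
  set P := (⟪w, zplus⟫ : ℝ) with hP
  set M := (⟪w, x⟫ : ℝ) with hM
  set A := ρ - S + D with hA
  set B := W - S + 2 * (P - M) with hB
  clear_value S W D N P M A B
  have hDnn : (0:ℝ) ≤ D := by rw [hD]; positivity
  have hApos : 0 ≤ A := by rw [hA]; linarith only [hρ, hs, hDnn]
  have hD1pos : (0:ℝ) < W + ρ := by linarith only [hWpos, hρpos]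
  -- h3 : (W+ρ) T = A Q − W B
  have h3 : (W + ρ) * (P - M) = A * (W - M) - W * B := by
    linear_combination hE1 + W * hB
  -- h4 : Pythagoras-style decomposition
  have h4 : W * ((W + ρ) ^ 2 * N)
      = A ^ 2 * (D * W - (W - M) ^ 2) + (W + ρ) ^ 2 * (P - M) ^ 2 := by
    linear_combination W * hE2 - (A * (W - M) - W * B + (W + ρ) * (P - M)) * h3
  -- the square trick
  have hT2 : (3 * W + ρ) ^ 2 * (P - M) ^ 2 = (A * (W - M) - (W - S) * W) ^ 2 := by
    linear_combination ((3 * W + ρ) * (P - M) + (A * (W - M) - (W - S) * W)) * hE1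
  have hstar2a : (3 * W + ρ) ^ 2 * (4 * (2 * W + ρ) * ((W + ρ) ^ 2 * (P - M) ^ 2))
      = 4 * (2 * W + ρ) * ((W + ρ) ^ 2 * (A * (W - M) - (W - S) * W) ^ 2) := by
    linear_combination 4 * (2 * W + ρ) * (W + ρ) ^ 2 * hT2
  have hstar2b : 4 * (2 * W + ρ) * ((W + ρ) ^ 2 * (A * (W - M) - (W - S) * W) ^ 2)
      ≤ (3 * W + ρ) ^ 2 * (4 * (2 * W + ρ) * (A ^ 2 * (W - M) ^ 2) + (W + ρ) ^ 2 * W * (W - S) ^ 2) := by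
    have h0 : (0:ℝ) ≤ W * (4 * (2 * W + ρ) * A * (W - M) + (W + ρ) ^ 2 * (W - S)) ^ 2 :=
      mul_nonneg hWpos.le (sq_nonneg _)
    calc 4 * (2 * W + ρ) * ((W + ρ) ^ 2 * (A * (W - M) - (W - S) * W) ^ 2)
        = (3 * W + ρ) ^ 2 * (4 * (2 * W + ρ) * (A ^ 2 * (W - M) ^ 2) + (W + ρ) ^ 2 * W * (W - S) ^ 2)
          - W * (4 * (2 * W + ρ) * A * (W - M) + (W + ρ) ^ 2 * (W - S)) ^ 2 := by ring
      _ ≤ _ := sub_le_self _ h0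
  have hD3sq : (0:ℝ) < (3 * W + ρ) ^ 2 := by positivity
  have h5 : 4 * (2 * W + ρ) * ((W + ρ) ^ 2 * (P - M) ^ 2)
      ≤ 4 * (2 * W + ρ) * (A ^ 2 * (W - M) ^ 2) + (W + ρ) ^ 2 * W * (W - S) ^ 2 := by
    refine le_of_mul_le_mul_left ?_ hD3sq
    calc (3 * W + ρ) ^ 2 * (4 * (2 * W + ρ) * ((W + ρ) ^ 2 * (P - M) ^ 2))
        = 4 * (2 * W + ρ) * ((W + ρ) ^ 2 * (A * (W - M) - (W - S) * W) ^ 2) := hstar2a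
      _ ≤ (3 * W + ρ) ^ 2 * (4 * (2 * W + ρ) * (A ^ 2 * (W - M) ^ 2) + (W + ρ) ^ 2 * W * (W - S) ^ 2) := hstar2b
  have h4' : 4 * (2 * W + ρ) * (W * ((W + ρ) ^ 2 * N))
      = 4 * (2 * W + ρ) * (A ^ 2 * (D * W - (W - M) ^ 2))
        + 4 * (2 * W + ρ) * ((W + ρ) ^ 2 * (P - M) ^ 2) := by
    linear_combination 4 * (2 * W + ρ) * h4
  have h6 : 4 * (2 * W + ρ) * (W * ((W + ρ) ^ 2 * N))
      ≤ 4 * (2 * W + ρ) * (A ^ 2 * (D * W)) + (W + ρ) ^ 2 * W * (W - S) ^ 2 := by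
    calc 4 * (2 * W + ρ) * (W * ((W + ρ) ^ 2 * N))
        = 4 * (2 * W + ρ) * (A ^ 2 * (D * W - (W - M) ^ 2))
          + 4 * (2 * W + ρ) * ((W + ρ) ^ 2 * (P - M) ^ 2) := h4'
      _ ≤ 4 * (2 * W + ρ) * (A ^ 2 * (D * W - (W - M) ^ 2))
          + (4 * (2 * W + ρ) * (A ^ 2 * (W - M) ^ 2) + (W + ρ) ^ 2 * W * (W - S) ^ 2) :=
        add_le_add_right h5 _
      _ = 4 * (2 * W + ρ) * (A ^ 2 * (D * W)) + (W + ρ) ^ 2 * W * (W - S) ^ 2 := by ring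
  -- final numeric estimates
  have hc2sq : (W - S) ^ 2 ≤ 289 / 4096 * S ^ 2 := by
    have hprod := mul_nonneg (by linarith only [hWu] : (0:ℝ) ≤ 81/64 * S - W)
      (by linarith only [hWl, hs] : (0:ℝ) ≤ W - 47/64 * S)
    linarith only [hprod]
  have hgap : A + 7 * S / 4 ≤ W + ρ := by rw [hA]; linarith only [hδ, hWl]
  have hA2 : A ^ 2 ≤ (W + ρ) ^ 2 - (7 * S / 4) * (W + ρ) := by
    have h1 := mul_nonneg (by linarith only [hgap] : (0:ℝ) ≤ W + ρ - A - 7 * S / 4)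
      (by linarith only [hD1pos, hApos] : (0:ℝ) ≤ W + ρ + A)
    have h2 := mul_nonneg hs.le hApos
    linarith only [h1, h2]
  have e1 : 4 * (2 * W + ρ) * (A ^ 2 * (D * W)) ≤ (2 * W + ρ) * W * (S / 16) * A ^ 2 := by
    rw [← sub_nonneg]
    calc (0:ℝ) ≤ (4 * (2 * W + ρ) * A ^ 2 * W) * (S / 64 - D) :=
          mul_nonneg (mul_nonneg (mul_nonneg (by linarith only [hWpos, hρpos]) (sq_nonneg A)) hWpos.le)
            (by linarith only [hδ])
      _ = (2 * W + ρ) * W * (S / 16) * A ^ 2 - 4 * (2 * W + ρ) * (A ^ 2 * (D * W)) := by ring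
  have e2 : (2 * W + ρ) * W * (S / 16) * A ^ 2
      ≤ (2 * W + ρ) * W * (S / 16) * ((W + ρ) ^ 2 - (7 * S / 4) * (W + ρ)) := by
    rw [← sub_nonneg]
    calc (0:ℝ) ≤ ((2 * W + ρ) * W * (S / 16)) * ((W + ρ) ^ 2 - (7 * S / 4) * (W + ρ) - A ^ 2) :=
          mul_nonneg (mul_nonneg (mul_nonneg (by linarith only [hWpos, hρpos]) hWpos.le)
              (by linarith only [hs]))
            (by linarith only [hA2])
      _ = (2 * W + ρ) * W * (S / 16) * ((W + ρ) ^ 2 - (7 * S / 4) * (W + ρ))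
          - (2 * W + ρ) * W * (S / 16) * A ^ 2 := by ring
  have e3 : (W + ρ) ^ 2 * W * (W - S) ^ 2 ≤ (W + ρ) ^ 2 * W * (289 / 4096 * S ^ 2) := by
    rw [← sub_nonneg]
    calc (0:ℝ) ≤ ((W + ρ) ^ 2 * W) * (289 / 4096 * S ^ 2 - (W - S) ^ 2) :=
          mul_nonneg (mul_nonneg (sq_nonneg _) hWpos.le) (by linarith only [hc2sq])
      _ = (W + ρ) ^ 2 * W * (289 / 4096 * S ^ 2) - (W + ρ) ^ 2 * W * (W - S) ^ 2 := by ring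
  have e4 : (2 * W + ρ) * W * (S / 16) * ((W + ρ) ^ 2 - (7 * S / 4) * (W + ρ))
        + (W + ρ) ^ 2 * W * (289 / 4096 * S ^ 2)
      ≤ 4 * (2 * W + ρ) * (W * ((W + ρ) ^ 2 * (S / 64))) := by
    rw [← sub_nonneg]
    calc (0:ℝ) ≤ (W * ((W + ρ) * S ^ 2)) * ((607 * W + 159 * ρ) / 4096) :=
          mul_nonneg (mul_nonneg hWpos.le (mul_nonneg hD1pos.le (sq_nonneg S)))
            (by linarith only [hWpos, hρpos])
      _ = 4 * (2 * W + ρ) * (W * ((W + ρ) ^ 2 * (S / 64)))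
          - ((2 * W + ρ) * W * (S / 16) * ((W + ρ) ^ 2 - (7 * S / 4) * (W + ρ))
            + (W + ρ) ^ 2 * W * (289 / 4096 * S ^ 2)) := by ring
  have h7 : 4 * (2 * W + ρ) * (W * ((W + ρ) ^ 2 * N))
      ≤ 4 * (2 * W + ρ) * (W * ((W + ρ) ^ 2 * (S / 64))) := by
    calc 4 * (2 * W + ρ) * (W * ((W + ρ) ^ 2 * N))
        ≤ 4 * (2 * W + ρ) * (A ^ 2 * (D * W)) + (W + ρ) ^ 2 * W * (W - S) ^ 2 := h6
      _ ≤ (2 * W + ρ) * W * (S / 16) * A ^ 2 + (W + ρ) ^ 2 * W * (289 / 4096 * S ^ 2) :=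
        add_le_add e1 e3
      _ ≤ (2 * W + ρ) * W * (S / 16) * ((W + ρ) ^ 2 - (7 * S / 4) * (W + ρ))
          + (W + ρ) ^ 2 * W * (289 / 4096 * S ^ 2) := add_le_add_left e2 _
      _ ≤ 4 * (2 * W + ρ) * (W * ((W + ρ) ^ 2 * (S / 64))) := e4
  have hKpos : (0:ℝ) < 4 * (2 * W + ρ) * (W * (W + ρ) ^ 2) := by
    have h1 : (0:ℝ) < 2 * W + ρ := by linarith only [hWpos, hρpos]
    positivity
  have hKN : (4 * (2 * W + ρ) * (W * (W + ρ) ^ 2)) * N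
      ≤ (4 * (2 * W + ρ) * (W * (W + ρ) ^ 2)) * (S / 64) := by
    calc (4 * (2 * W + ρ) * (W * (W + ρ) ^ 2)) * N
        = 4 * (2 * W + ρ) * (W * ((W + ρ) ^ 2 * N)) := by ring
      _ ≤ 4 * (2 * W + ρ) * (W * ((W + ρ) ^ 2 * (S / 64))) := h7
      _ = (4 * (2 * W + ρ) * (W * (W + ρ) ^ 2)) * (S / 64) := by ring
  have hNle : N ≤ S / 64 := le_of_mul_le_mul_left hKN hKpos
  have hfin : ‖zplus - x‖ ^ 2 ≤ (1 / 8 * ‖x‖) ^ 2 := by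
    rw [← hN]
    have : (1 / 8 * ‖x‖) ^ 2 = S / 64 := by rw [hS]; ring
    rw [this]
    exact hNle
  calc ‖zplus - x‖ = Real.sqrt (‖zplus - x‖ ^ 2) := (Real.sqrt_sq (norm_nonneg _)).symm
    _ ≤ Real.sqrt ((1 / 8 * ‖x‖) ^ 2) := Real.sqrt_le_sqrt hfin
    _ = 1 / 8 * ‖x‖ := Real.sqrt_sq (by positivity)
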